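/- Let X_J ⊂ X be measurable with μ(X_J) > 0, set μ_J := μ restricted to X_J, let ν_J ∈ M₊(Y) satisfy ν_J ≤ ν and ‖ν_J‖ = ‖μ_J‖, let u ∈ L^∞₊(X,μ), v ∈ L^∞₊(Y,ν) be such that π := (u⊗v)·K ∈ Π(μ_J, ν_J), let X_i ⊂ X_J be measurable with μ(X_i) > 0, and set ν_i := P_Y(π restricted to X_i×Y). Then for every ν' ∈ M₊(Y) with ν' ≤ ν_J, one has dν_i/dν(y) ≥ exp(−2‖c‖_∞/ε)·μ(X_i)·dν'/dν(y) for ν-a.e. y ∈ Y. -/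

import Mathlib

open MeasureTheory ENNReal Filter Topology

noncomputable section

/-- `phi s = s * log s - s + 1` (note `phi 0 = 1` since `Real.log 0 = 0`);
this is the integrand of the Kullback--Leibler divergence. -/
def phi (s : ℝ) : ℝ := s * Real.log s - s + 1

open Classical in
/-- Kullback--Leibler divergence `KL(ρ|σ) ∈ [0,∞]`: `∫ phi (dρ/dσ) dσ` if `ρ ≪ σ`,
and `∞` otherwise (nonnegativity of `ρ` is automatic for measures). -/
def KL {Z : Type*} [MeasurableSpace Z] (ρ σ : Measure Z) : ℝ≥0∞ :=
  if ρ ≪ σ then ∫⁻ z, ENNReal.ofReal (phi ((ρ.rnDeriv σ) z).toReal) ∂σ else ⊤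

/-- The set `Π(μh, νh)` of transport plans with marginals `μh` and `νh`. -/
def Coupling {X Y : Type*} [MeasurableSpace X] [MeasurableSpace Y]
    (μh : Measure X) (νh : Measure Y) : Set (Measure (X × Y)) :=
  {π | π.map Prod.fst = μh ∧ π.map Prod.snd = νh}

/-- The Gibbs kernel measure `K = exp(-c/ε) ⋅ (μ ⊗ ν)`. -/
def Kmeas {X Y : Type*} [MeasurableSpace X] [MeasurableSpace Y]
    (μ : Measure X) (ν : Measure Y) [SFinite ν] (c : X × Y → ℝ) (ε : ℝ) : Measure (X × Y) :=
  (μ.prod ν).withDensity fun p => ENNReal.ofReal (Real.exp (-c p / ε))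

/-- The product density `(u ⊗ v)(x,y) = u x * v y`, as an `ℝ≥0∞`-valued density. -/
def prodDensity {X Y : Type*} (u : X → ℝ) (v : Y → ℝ) : X × Y → ℝ≥0∞ :=
  fun p => ENNReal.ofReal (u p.1 * v p.2)

/-- `L^∞₊(μ)`: measurable, a.e. nonnegative, essentially bounded functions. -/
def LinftyPlus {Z : Type*} [MeasurableSpace Z] (μ : Measure Z) (u : Z → ℝ) : Prop :=
  Measurable u ∧ (∀ᵐ z ∂μ, 0 ≤ u z) ∧ ∃ C : ℝ, ∀ᵐ z ∂μ, u z ≤ C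

theorem aux_marginal
    {X Y : Type*} [MeasurableSpace X] [MeasurableSpace Y]
    (μ : Measure X) (ν : Measure Y) [SFinite μ] [SFinite ν]
    {f : X × Y → ℝ≥0∞} (hfm : Measurable f)
    (π : Measure (X × Y)) (hπ : π = (μ.prod ν).withDensity f)
    (A : Set X) (hA : MeasurableSet A) :
    (π.restrict (A ×ˢ Set.univ)).map Prod.snd
      = ν.withDensity (fun y => ∫⁻ x in A, f (x, y) ∂μ) := by
  ext s hs
  rw [Measure.map_apply measurable_snd hs, Measure.restrict_apply (measurable_snd hs),
    withDensity_apply _ hs]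
  have hset : Prod.snd ⁻¹' s ∩ A ×ˢ Set.univ = A ×ˢ s := by
    ext p; simp [and_comm]
  rw [hset, hπ, withDensity_apply _ (hA.prod hs), ← Measure.prod_restrict,
    lintegral_prod_symm' f hfm]

/-- Lemma 2.9 (v), eq. (2.16): one-step lower bound on the basic
cell `Y`-marginal density: for any `ν' ≤ ν_J`,
`dνᵢ/dν ≥ exp(−2‖c‖/ε)·μ(Xᵢ)·dν'/dν` a.e. -/
theorem density_rel_bound
    {X Y : Type*} [MetricSpace X] [CompactSpace X] [MeasurableSpace X] [BorelSpace X]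
    [MetricSpace Y] [CompactSpace Y] [MeasurableSpace Y] [BorelSpace Y]
    (μ : Measure X) (ν : Measure Y) [IsProbabilityMeasure μ] [IsProbabilityMeasure ν]
    (c : X × Y → ℝ) (hc : Measurable c) (cmax : ℝ)
    (hc0 : ∀ p, 0 ≤ c p) (hcmax : ∀ p, c p ≤ cmax)
    (ε : ℝ) (hε : 0 < ε)
    (XJ : Set X) (hXJ : MeasurableSet XJ) (hXJpos : 0 < μ XJ)
    (νJ : Measure Y) (hνJle : νJ ≤ ν) (hνJmass : νJ Set.univ = μ XJ)
    (u : X → ℝ) (v : Y → ℝ) (hu : LinftyPlus μ u) (hv : LinftyPlus ν v)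
    (π : Measure (X × Y)) (hπdef : π = (Kmeas μ ν c ε).withDensity (prodDensity u v))
    (hplan : π ∈ Coupling (μ.restrict XJ) νJ)
    (Xi : Set X) (hXi : MeasurableSet Xi) (hXisub : Xi ⊆ XJ) (hXipos : 0 < μ Xi)
    (νi : Measure Y) (hνi : νi = (π.restrict (Xi ×ˢ Set.univ)).map Prod.snd) :
    ∀ ν' : Measure Y, ν' ≤ νJ →
      ∀ᵐ y ∂ν,
        Real.exp (-(2 * cmax) / ε) * (μ Xi).toReal * (ν'.rnDeriv ν y).toReal ≤
          (νi.rnDeriv ν y).toReal := by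
  intro ν' hν'
  obtain ⟨hum, hu0, -⟩ := hu
  obtain ⟨hvm, hv0, -⟩ := hv
  set f : X × Y → ℝ≥0∞ :=
    fun p => ENNReal.ofReal (Real.exp (-c p / ε)) * ENNReal.ofReal (u p.1 * v p.2) with hfdef
  have hfm : Measurable f :=
    (((hc.neg).div_const ε).exp).ennreal_ofReal.mul
      ((hum.comp measurable_fst).mul (hvm.comp measurable_snd)).ennreal_ofReal
  have hpd : Measurable (prodDensity u v) := by
    unfold prodDensity
    exact ((hum.comp measurable_fst).mul (hvm.comp measurable_snd)).ennreal_ofReal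
  have hπ : π = (μ.prod ν).withDensity f := by
    rw [hπdef, Kmeas, ← withDensity_mul _ (show Measurable (fun p => ENNReal.ofReal (Real.exp (-c p / ε))) from (((hc.neg).div_const ε).exp).ennreal_ofReal) hpd]
    rfl
  -- basic constants
  set E : ℝ≥0∞ := ENNReal.ofReal (Real.exp (-cmax / ε)) with hE
  have hEne : E ≠ ∞ := ofReal_ne_top
  -- pointwise bounds on exp factor
  have hexp_le_one : ∀ p : X × Y, ENNReal.ofReal (Real.exp (-c p / ε)) ≤ 1 := by
    intro p
    rw [← ENNReal.ofReal_one]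
    apply ENNReal.ofReal_le_ofReal
    rw [← Real.exp_zero]
    exact Real.exp_le_exp.2 (div_nonpos_of_nonpos_of_nonneg (neg_nonpos.2 (hc0 p)) hε.le)
  have hexp_ge : ∀ p : X × Y, E ≤ ENNReal.ofReal (Real.exp (-c p / ε)) := by
    intro p
    apply ENNReal.ofReal_le_ofReal
    apply Real.exp_le_exp.2
    exact div_le_div_of_nonneg_right (neg_le_neg (hcmax p)) hε.le
  set g1 : X → ℝ≥0∞ := fun x => ENNReal.ofReal (u x) with hg1
  set g2 : Y → ℝ≥0∞ := fun y => ENNReal.ofReal (v y) with hg2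
  set A : ℝ≥0∞ := ∫⁻ x, g1 x ∂μ with hA
  set Ai : ℝ≥0∞ := ∫⁻ x in Xi, g1 x ∂μ with hAi
  set B : ℝ≥0∞ := ∫⁻ y, g2 y ∂ν with hB
  -- a.e. splitting of f
  have hsplit : ∀ᵐ x ∂μ, ∀ y, f (x, y)
      = ENNReal.ofReal (Real.exp (-c (x,y) / ε)) * (g1 x * g2 y) := by
    filter_upwards [hu0] with x hx
    intro y
    rw [hfdef]
    simp only []
    rw [ENNReal.ofReal_mul hx]
  -- densities of the marginals
  set Di : Y → ℝ≥0∞ := fun y => ∫⁻ x in Xi, f (x, y) ∂μ with hDi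
  set Dall : Y → ℝ≥0∞ := fun y => ∫⁻ x, f (x, y) ∂μ with hDall
  have hDim : Measurable Di := hfm.lintegral_prod_left'
  have hDallm : Measurable Dall := hfm.lintegral_prod_left'
  have hνi' : νi = ν.withDensity Di := by
    rw [hνi]; exact aux_marginal μ ν hfm π hπ Xi hXi
  have hνJ' : νJ = ν.withDensity Dall := by
    have := aux_marginal μ ν hfm π hπ Set.univ MeasurableSet.univ
    rw [Set.univ_prod_univ, Measure.restrict_univ, hplan.2] at this
    rw [this]
    congr 1
    funext y
    rw [Measure.restrict_univ]
  have rnDi : νi.rnDeriv ν =ᵐ[ν] Di := by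
    rw [hνi']; exact Measure.rnDeriv_withDensity ν hDim
  have rnν'le : ν'.rnDeriv ν ≤ᵐ[ν] Dall := by
    apply ae_le_of_forall_setLIntegral_le_of_sigmaFinite₀
      (Measure.measurable_rnDeriv ν' ν).aemeasurable
    intro s hs _
    calc ∫⁻ y in s, ν'.rnDeriv ν y ∂ν ≤ ν' s := Measure.setLIntegral_rnDeriv_le s
      _ ≤ νJ s := Measure.le_iff'.1 hν' s
      _ = ∫⁻ y in s, Dall y ∂ν := by rw [hνJ', withDensity_apply _ hs]
  -- pointwise bounds on the densities
  have hDiLB : ∀ y, E * (Ai * g2 y) ≤ Di y := by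
    intro y
    have hmono : ∀ᵐ x ∂(μ.restrict Xi), E * (g1 x * g2 y) ≤ f (x, y) := by
      filter_upwards [ae_restrict_of_ae (hsplit)] with x hx
      rw [hx y]
      exact mul_le_mul_left (hexp_ge (x, y)) _
    calc E * (Ai * g2 y) = ∫⁻ x in Xi, E * (g1 x * g2 y) ∂μ := by
          rw [lintegral_const_mul E (show Measurable (fun x => g1 x * g2 y) from (hum.ennreal_ofReal).mul measurable_const),
            lintegral_mul_const _ hum.ennreal_ofReal]
      _ ≤ Di y := lintegral_mono_ae hmono
  have hDallUB : ∀ y, Dall y ≤ A * g2 y := by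
    intro y
    have hmono : ∀ᵐ x ∂μ, f (x, y) ≤ g1 x * g2 y := by
      filter_upwards [hsplit] with x hx
      rw [hx y]
      calc ENNReal.ofReal (Real.exp (-c (x,y) / ε)) * (g1 x * g2 y)
          ≤ 1 * (g1 x * g2 y) := mul_le_mul_left (hexp_le_one _) _
        _ = g1 x * g2 y := one_mul _
    calc Dall y ≤ ∫⁻ x, g1 x * g2 y ∂μ := lintegral_mono_ae hmono
      _ = A * g2 y := lintegral_mul_const _ hum.ennreal_ofReal
  -- mass bounds
  have hμXi : μ Xi ≤ Ai * B := by
    have h2 : (μ.restrict XJ) Xi = μ Xi := by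
      rw [Measure.restrict_apply hXi, Set.inter_eq_self_of_subset_left hXisub]
    have h1 : μ Xi = π (Xi ×ˢ Set.univ) := by
      rw [← h2, ← hplan.1, Measure.map_apply measurable_fst hXi]
      congr 1
      ext p; simp
    rw [h1, hπ, withDensity_apply _ (hXi.prod MeasurableSet.univ), ← Measure.prod_restrict,
      Measure.restrict_univ, lintegral_prod f hfm.aemeasurable]
    have hinner : ∀ᵐ x ∂(μ.restrict Xi), ∫⁻ y, f (x, y) ∂ν ≤ g1 x * B := by
      filter_upwards [ae_restrict_of_ae hsplit] with x hx
      have : ∀ᵐ y ∂ν, f (x, y) ≤ g1 x * g2 y := by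
        filter_upwards with y
        rw [hx y]
        calc ENNReal.ofReal (Real.exp (-c (x,y) / ε)) * (g1 x * g2 y)
            ≤ 1 * (g1 x * g2 y) := mul_le_mul_left (hexp_le_one _) _
          _ = g1 x * g2 y := one_mul _
      calc ∫⁻ y, f (x, y) ∂ν ≤ ∫⁻ y, g1 x * g2 y ∂ν := lintegral_mono_ae this
        _ = g1 x * B := lintegral_const_mul (g1 x) hvm.ennreal_ofReal
    calc ∫⁻ x in Xi, ∫⁻ y, f (x, y) ∂ν ∂μ ≤ ∫⁻ x in Xi, g1 x * B ∂μ := lintegral_mono_ae hinner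
      _ = Ai * B := lintegral_mul_const _ hum.ennreal_ofReal
  have hπuniv : π Set.univ = μ XJ := by
    have : (π.map Prod.snd) Set.univ = π Set.univ := by
      rw [Measure.map_apply measurable_snd MeasurableSet.univ, Set.preimage_univ]
    rw [← this, hplan.2, hνJmass]
  have hABle : E * (A * B) ≤ 1 := by
    have hu0' : ∀ᵐ p ∂(μ.prod ν), 0 ≤ u p.1 := by
      rw [ae_iff] at hu0 ⊢
      have hset : {p : X × Y | ¬ 0 ≤ u p.1} = {x | ¬ 0 ≤ u x} ×ˢ (Set.univ : Set Y) := by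
        ext p; simp
      rw [hset, Measure.prod_prod, hu0, zero_mul]
    have hlb : ∀ᵐ p ∂(μ.prod ν), E * (g1 p.1 * g2 p.2) ≤ f p := by
      filter_upwards [hu0'] with p hp
      have : f p = ENNReal.ofReal (Real.exp (-c p / ε)) * (g1 p.1 * g2 p.2) := by
        rw [hfdef]
        simp only []
        rw [ENNReal.ofReal_mul hp]
      rw [this]
      exact mul_le_mul_left (hexp_ge p) _
    have step : E * (A * B) ≤ π Set.univ := by
      rw [hπ, withDensity_apply _ MeasurableSet.univ, Measure.restrict_univ]
      calc E * (A * B) = ∫⁻ p, E * (g1 p.1 * g2 p.2) ∂(μ.prod ν) := by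
            have hm12 : Measurable (fun p : X × Y => g1 p.1 * g2 p.2) :=
              (((hum.comp measurable_fst).ennreal_ofReal).mul
                ((hvm.comp measurable_snd).ennreal_ofReal))
            rw [lintegral_const_mul E hm12,
              lintegral_prod_mul hum.ennreal_ofReal.aemeasurable hvm.ennreal_ofReal.aemeasurable]
        _ ≤ ∫⁻ p, f p ∂(μ.prod ν) := lintegral_mono_ae hlb
    exact step.trans (by rw [hπuniv]; exact prob_le_one)
  -- finiteness
  haveI : IsFiniteMeasure π := ⟨by rw [hπuniv]; exact lt_of_le_of_lt prob_le_one one_lt_top⟩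
  haveI : IsFiniteMeasure νi := by
    constructor
    rw [hνi, Measure.map_apply measurable_snd MeasurableSet.univ, Set.preimage_univ,
      Measure.restrict_apply_univ]
    exact measure_lt_top π _
  haveI : IsFiniteMeasure ν' :=
    ⟨lt_of_le_of_lt (le_trans (Measure.le_iff'.1 hν' _) (Measure.le_iff'.1 hνJle _))
      (measure_lt_top ν _)⟩
  -- conclusion
  filter_upwards [rnDi, rnν'le, Measure.rnDeriv_lt_top νi ν] with y h1 h2 h3
  have key : (E * E) * (μ Xi * ν'.rnDeriv ν y) ≤ νi.rnDeriv ν y := by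
    rw [h1]
    calc (E * E) * (μ Xi * ν'.rnDeriv ν y)
        ≤ (E * E) * ((Ai * B) * (A * g2 y)) :=
          mul_le_mul_right (mul_le_mul' hμXi (h2.trans (hDallUB y))) _
      _ = (E * (A * B)) * (E * (Ai * g2 y)) := by ring
      _ ≤ 1 * (E * (Ai * g2 y)) := mul_le_mul_left hABle _
      _ = E * (Ai * g2 y) := one_mul _
      _ ≤ Di y := hDiLB y
  have hmain := ENNReal.toReal_mono h3.ne key
  rw [ENNReal.toReal_mul, ENNReal.toReal_mul, ENNReal.toReal_mul] at hmain
  have hEE : E.toReal * E.toReal = Real.exp (-(2 * cmax) / ε) := by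
    rw [hE, ENNReal.toReal_ofReal (Real.exp_nonneg _), ← Real.exp_add]
    congr 1
    ring
  rw [hEE] at hmain
  calc Real.exp (-(2 * cmax) / ε) * (μ Xi).toReal * (ν'.rnDeriv ν y).toReal
      = Real.exp (-(2 * cmax) / ε) * ((μ Xi).toReal * (ν'.rnDeriv ν y).toReal) := by ring
    _ ≤ (νi.rnDeriv ν y).toReal := hmain
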